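/- Let U ⊆ ℂ be open, let a, b, c, d ∈ ℂ with a·d − b·c = 1, set γ(z) = (a·z+b)/(c·z+d), and assume γ(z) ∈ U for all z ∈ U with c·z+d ≠ 0. Let λ ∈ ℂ, λ ≠ 0, and let E : ℂ → ℂ be analytic on U satisfying the weight-2 quasimodular transformation law E(γ(z)) = (c·z+d)²·E(z) + λ·c·(c·z+d) for all z ∈ U with c·z+d ≠ 0. Define H(z) = z + λ/E(z). Then for every z ∈ U with c·z+d ≠ 0, E(z) ≠ 0, E(γ(z)) ≠ 0, and c·H(z)+d ≠ 0, one has H(γ(z)) = (a·H(z) + b)/(c·H(z) + d). -/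

import Mathlib

/-- The Heins–Nahm construction: if `E` satisfies the weight-2 quasimodular
transformation law `E(γz) = (cz+d)²·E(z) + λ·c·(cz+d)`, then `H(z) = z + λ/E(z)`
is equivariant. -/
theorem heins_nahm_equivariance
    (U : Set ℂ) (hU : IsOpen U)
    (a b c d : ℂ) (hdet : a * d - b * c = 1)
    (γ : ℂ → ℂ) (hγ : γ = fun z => (a * z + b) / (c * z + d))
    (hmaps : ∀ z ∈ U, c * z + d ≠ 0 → γ z ∈ U)
    (lam : ℂ) (hlam : lam ≠ 0)
    (E : ℂ → ℂ) (hE : AnalyticOnNhd ℂ E U)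
    (hquasi : ∀ z ∈ U, c * z + d ≠ 0 →
      E (γ z) = (c * z + d) ^ 2 * E z + lam * c * (c * z + d))
    (H : ℂ → ℂ) (hH : H = fun z => z + lam / E z) :
    ∀ z ∈ U, c * z + d ≠ 0 → E z ≠ 0 → E (γ z) ≠ 0 → c * H z + d ≠ 0 →
      H (γ z) = (a * H z + b) / (c * H z + d) := by
  intro z hz hcd hEz hEg hcH
  have hq := hquasi z hz hcd
  subst hH
  simp only at hcH ⊢
  rw [hq] at hEg ⊢
  subst hγ
  simp only at *
  set Ez := E z with hEzdef
  have hcH' : c * (z * Ez + lam) + d * Ez ≠ 0 := by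
    intro h; apply hcH; field_simp; linear_combination h
  have hEg' : (z * c + d) * Ez + c * lam ≠ 0 := by
    intro h; apply hEg; linear_combination (c * z + d) * h
  have hcd' : z * c + d ≠ 0 := by
    intro h; apply hcd; linear_combination h
  field_simp
  linear_combination (-lam * (c * (z * Ez + lam) + d * Ez)) * hdet
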